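/- Let R be a commutative ring, m a natural number, and M an m×m matrix over R. Then s(adj(M)) = ∑_{σ ∈ S_m} sgn(σ) · F((M_{i,σ(i)})_{i ∈ {1,…,m}}), where the sum is over all permutations σ of {1,…,m}. -/

import Mathlib

open Matrix

/-- The sum of all entries of a square matrix. -/
def matS {ι R : Type*} [Fintype ι] [CommRing R] (M : Matrix ι ι R) : R :=
  ∑ i, ∑ j, M i j

/-- `Ffam s x = ∑_{i ∈ s} ∏_{j ∈ s \ {i}} x j`. -/
def Ffam {ι R : Type*} [DecidableEq ι] [CommRing R] (s : Finset ι) (x : ι → R) : R :=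
  ∑ i ∈ s, ∏ j ∈ s.erase i, x j

theorem stmt3 {R : Type*} [CommRing R] (m : ℕ) (M : Matrix (Fin m) (Fin m) R) :
    matS M.adjugate =
      ∑ σ : Equiv.Perm (Fin m),
        (Equiv.Perm.sign σ : ℤ) • Ffam Finset.univ (fun i => M i (σ i)) := by
  unfold matS Ffam
  simp only [adjugate_apply, det_apply, Units.smul_def]
  calc (∑ i, ∑ j, ∑ σ : Equiv.Perm (Fin m),
          (Equiv.Perm.sign σ : ℤ) • ∏ k, (M.updateRow j (Pi.single i 1)) (σ k) k)
      = ∑ i, ∑ σ : Equiv.Perm (Fin m), ∑ j,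
          (Equiv.Perm.sign σ : ℤ) • ∏ k, (M.updateRow j (Pi.single i 1)) (σ k) k :=
        Finset.sum_congr rfl fun i _ => Finset.sum_comm
    _ = ∑ σ : Equiv.Perm (Fin m), ∑ i, ∑ j,
          (Equiv.Perm.sign σ : ℤ) • ∏ k, (M.updateRow j (Pi.single i 1)) (σ k) k :=
        Finset.sum_comm
    _ = ∑ σ : Equiv.Perm (Fin m),
          (Equiv.Perm.sign σ : ℤ) • ∑ i, ∏ k ∈ Finset.univ.erase i, M (σ k) k := by
        refine Finset.sum_congr rfl fun σ _ => ?_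
        rw [Finset.smul_sum]
        refine Finset.sum_congr rfl fun i _ => ?_
        rw [← Finset.smul_sum]
        congr 1
        have step : ∀ j, (∏ k, (M.updateRow j (Pi.single i 1)) (σ k) k)
            = (Pi.single i 1 : Fin m → R) (σ⁻¹ j) * ∏ k ∈ Finset.univ.erase (σ⁻¹ j), M (σ k) k := by
          intro j
          rw [← Finset.mul_prod_erase Finset.univ _ (Finset.mem_univ (σ⁻¹ j))]
          congr 1
          · simp [updateRow_apply]
          · refine Finset.prod_congr rfl fun k hk => ?_
            have : σ k ≠ j := fun h => (Finset.mem_erase.mp hk).1 (by simp [← h])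
            simp [updateRow_apply, this]
        simp_rw [step]
        rw [Equiv.sum_comp σ⁻¹ (fun l => (Pi.single i 1 : Fin m → R) l * ∏ k ∈ Finset.univ.erase l, M (σ k) k)]
        rw [Finset.sum_eq_single i]
        · simp
        · intro b _ hb
          simp [Pi.single_apply, hb]
        · simp
    _ = ∑ σ : Equiv.Perm (Fin m),
          (Equiv.Perm.sign σ : ℤ) • ∑ i, ∏ j ∈ Finset.univ.erase i, M j (σ j) := by
        refine Fintype.sum_equiv (Equiv.inv (Equiv.Perm (Fin m))) _ _ fun σ => ?_
        simp only [Equiv.inv_apply]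
        rw [Equiv.Perm.sign_inv]
        congr 1
        refine Fintype.sum_equiv σ _ _ fun i => ?_
        refine Finset.prod_nbij' (fun k => σ k) (fun k => σ⁻¹ k) ?_ ?_ ?_ ?_ ?_ <;>
          intro k hk <;> simp only [Finset.mem_erase, Finset.mem_univ, and_true] at *
        · exact fun h => hk (σ.injective h)
        · exact fun h => hk (by simpa using congrArg σ h)
        · simp
        · simp
        · simp
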